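/- Fix t ∈ (0,1) and let x_t = Y + γ(t)z where Y = I(t,x₀,x₁) is independent of z ~ N(0, Id) and γ(t) > 0. Let ρ(t,·) denote the (smooth, strictly positive) density of x_t. Then for every compactly supported smooth φ: ℝ^d → ℝ one has E[z φ(x_t)] = −γ(t) ∫_{ℝ^d} φ(x) ∇ρ(t,x) dx. Equivalently, the conditional expectation η_z(t,x) = E[z | x_t = x] satisfies η_z(t,x) ρ(t,x) = −γ(t) ∇ρ(t,x), i.e. the score s(t,x) = ∇ log ρ(t,x) equals −γ(t)^{-1} η_z(t,x) for all x ∈ ℝ^d. -/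

import Mathlib

open MeasureTheory ProbabilityTheory Real Set
open scoped RealInnerProductSpace ENNReal

noncomputable section

/-- The standard Gaussian measure `N(0, Id)` on `ℝ^d`. -/
def stdGaussian (d : ℕ) : Measure (EuclideanSpace ℝ (Fin d)) :=
  volume.withDensity fun x => ENNReal.ofReal ((2 * π) ^ (-(d : ℝ) / 2) * Real.exp (-‖x‖ ^ 2 / 2))

namespace ScoreAux

variable {d : ℕ}

local notation "E" => EuclideanSpace ℝ (Fin d)

lemma one_le_inf : (1 : WithTop ℕ∞) ≤ ((⊤ : ℕ∞) : WithTop ℕ∞) := by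
  exact_mod_cast le_top

lemma inner_grad (f : E → ℝ) (x v : E) : ⟪gradient f x, v⟫ = fderiv ℝ f x v := by
  rw [gradient, ← InnerProductSpace.toDual_apply_apply, LinearIsometryEquiv.apply_symm_apply]

lemma grad_cont {f : E → ℝ} (hf : ContDiff ℝ (⊤ : ℕ∞) f) : Continuous (gradient f) :=
  (InnerProductSpace.toDual ℝ _).symm.continuous.comp (hf.continuous_fderiv (ENat.one_le_iff_ne_zero_withTop.mp one_le_inf))

lemma grad_supp {f : E → ℝ} (hf : HasCompactSupport f) : HasCompactSupport (gradient f) :=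
  (hf.fderiv (𝕜 := ℝ)).comp_left (g := fun L : E →L[ℝ] ℝ => (InnerProductSpace.toDual ℝ _).symm L)
    (by simp)

lemma ibp (f g : E → ℝ) (hf : ContDiff ℝ (⊤ : ℕ∞) f) (hfc : HasCompactSupport f)
    (hg : ContDiff ℝ (⊤ : ℕ∞) g) (v : E) :
    ∫ x, f x * fderiv ℝ g x v = - ∫ x, fderiv ℝ f x v * g x := by
  have hfd : Differentiable ℝ f := hf.differentiable (ENat.one_le_iff_ne_zero_withTop.mp one_le_inf)
  have hgd : Differentiable ℝ g := hg.differentiable (ENat.one_le_iff_ne_zero_withTop.mp one_le_inf)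
  have hfc' : HasCompactSupport (fun x => fderiv ℝ f x v) :=
    (hfc.fderiv (𝕜 := ℝ)).comp_left (g := fun L : E →L[ℝ] ℝ => L v) rfl
  have hcf' : Continuous (fun x => fderiv ℝ f x v) :=
    (hf.continuous_fderiv (ENat.one_le_iff_ne_zero_withTop.mp one_le_inf)).clm_apply continuous_const
  have hcg' : Continuous (fun x => fderiv ℝ g x v) :=
    (hg.continuous_fderiv (ENat.one_le_iff_ne_zero_withTop.mp one_le_inf)).clm_apply continuous_const
  exact integral_mul_fderiv_eq_neg_fderiv_mul_of_integrable
    ((hcf'.mul hg.continuous).integrable_of_hasCompactSupport (hfc'.mul_right))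
    ((hf.continuous.mul hcg').integrable_of_hasCompactSupport (hfc.mul_right))
    ((hf.continuous.mul hg.continuous).integrable_of_hasCompactSupport (hfc.mul_right))
    (fun x _ => hfd x) (fun x _ => hgd x)

lemma ibp_vec (f g : E → ℝ) (hf : ContDiff ℝ (⊤ : ℕ∞) f) (hfc : HasCompactSupport f)
    (hg : ContDiff ℝ (⊤ : ℕ∞) g) :
    ∫ x, f x • gradient g x = - ∫ x, g x • gradient f x := by
  have I1 : Integrable (fun x => f x • gradient g x) :=
    (hf.continuous.smul (grad_cont hg)).integrable_of_hasCompactSupport hfc.smul_right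
  have I2 : Integrable (fun x => g x • gradient f x) :=
    (hg.continuous.smul (grad_cont hf)).integrable_of_hasCompactSupport (grad_supp hfc).smul_left
  refine ext_inner_right ℝ fun v => ?_
  have hflip : ∀ w : E, (inner ℝ w v : ℝ) = inner ℝ v w := fun w => real_inner_comm v w
  rw [hflip, hflip, ← integral_inner I1, inner_neg_right, ← integral_inner I2]
  simp_rw [real_inner_smul_right]
  rw [← integral_neg]
  have e1 : ∀ x, f x * ⟪v, gradient g x⟫ = f x * fderiv ℝ g x v := by
    intro x; rw [real_inner_comm, inner_grad]
  have e2 : ∀ x, -(g x * ⟪v, gradient f x⟫) = -(fderiv ℝ f x v * g x) := by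
    intro x; rw [real_inner_comm, inner_grad, mul_comm]
  simp_rw [e1, e2, integral_neg]
  exact ibp f g hf hfc hg v

def gaussD (d : ℕ) (z : EuclideanSpace ℝ (Fin d)) : ℝ :=
  (2 * π) ^ (-(d : ℝ) / 2) * Real.exp (-‖z‖ ^ 2 / 2)

lemma gaussD_pos (z : E) : 0 < gaussD d z := by
  unfold gaussD; positivity

lemma gaussD_smooth : ContDiff ℝ (⊤ : ℕ∞) (gaussD d) := by
  unfold gaussD
  exact contDiff_const.mul (((contDiff_norm_sq ℝ).neg.div_const 2).exp)

lemma stdGaussian_eq : stdGaussian d = volume.withDensity fun x => ENNReal.ofReal (gaussD d x) :=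
  rfl

lemma fderiv_gaussD (z v : E) : fderiv ℝ (gaussD d) z v = -⟪z, v⟫ * gaussD d z := by
  have h1 : HasFDerivAt (fun z : E => ‖z‖ ^ 2) (2 • (innerSL ℝ z)) z :=
    (hasStrictFDerivAt_norm_sq z).hasFDerivAt
  have h2 : HasFDerivAt (fun z : E => -‖z‖ ^ 2 / 2) ((-(2⁻¹ : ℝ)) • (2 • (innerSL ℝ z))) z := by
    have h2' := h1.const_mul (-(2⁻¹ : ℝ))
    have heq : (fun z : E => -(2⁻¹ : ℝ) * ‖z‖ ^ 2) = (fun z : E => -‖z‖ ^ 2 / 2) := by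
      funext w; ring
    rwa [heq] at h2'
  have h3 := (Real.hasDerivAt_exp (-‖z‖ ^ 2 / 2)).comp_hasFDerivAt z h2
  have h4 := h3.const_mul ((2 * π) ^ (-(d : ℝ) / 2))
  have : HasFDerivAt (gaussD d)
      (((2 * π) ^ (-(d : ℝ) / 2)) •
        (Real.exp (-‖z‖ ^ 2 / 2) • ((-(2⁻¹ : ℝ)) • (2 • (innerSL ℝ z))))) z := h4
  rw [this.fderiv]
  simp only [ContinuousLinearMap.smul_apply, innerSL_apply_apply, smul_eq_mul, nsmul_eq_mul,
    Nat.cast_ofNat]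
  unfold gaussD
  ring

lemma integral_density {F : Type*} [NormedAddCommGroup F] [NormedSpace ℝ F]
    (ρ : E → ℝ) (hρc : Continuous ρ) (hρ0 : ∀ x, 0 ≤ ρ x) (f : E → F) :
    ∫ x, f x ∂(volume.withDensity fun x => ENNReal.ofReal (ρ x)) = ∫ x, ρ x • f x := by
  rw [show (fun x : E => ENNReal.ofReal (ρ x)) = (fun x => ((ρ x).toNNReal : ℝ≥0∞)) from rfl,
    integral_withDensity_eq_integral_smul hρc.measurable.real_toNNReal]
  congr 1; funext x; rw [NNReal.smul_def, Real.coe_toNNReal _ (hρ0 x)]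

lemma integrable_gauss (b : ℝ) (hb : 0 < b) :
    Integrable (fun z : E => Real.exp (-b * ‖z‖ ^ 2)) := by
  have h := (GaussianFourier.integrable_cexp_neg_mul_sq_norm_add (V := E) (b := (b : ℂ))
    (by simpa using hb) 0 0).norm
  simpa [Complex.norm_exp, ← Complex.ofReal_pow] using h

lemma integrable_norm_gaussD : Integrable (fun z : E => gaussD d z * ‖z‖) := by
  set c : ℝ := (2 * π) ^ (-(d : ℝ) / 2) with hc
  have hcpos : 0 < c := by positivity
  have hInt : Integrable (fun z : E => (c * Real.exp 1) * Real.exp (-(4⁻¹ : ℝ) * ‖z‖ ^ 2)) :=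
    (integrable_gauss 4⁻¹ (by norm_num)).const_mul _
  refine hInt.mono' ?_ (Filter.Eventually.of_forall fun z => ?_)
  · exact ((gaussD_smooth).continuous.mul continuous_norm).aestronglyMeasurable
  · set r := ‖z‖ with hr
    have hr0 : 0 ≤ r := norm_nonneg _
    have hgz : gaussD d z * r = c * (Real.exp (-r ^ 2 / 2) * r) := by unfold gaussD; ring
    have hb : ‖gaussD d z * r‖ = gaussD d z * r := by
      rw [Real.norm_eq_abs, abs_of_nonneg]
      exact mul_nonneg (gaussD_pos z).le hr0
    rw [hb, hgz]
    have h1 : r ≤ Real.exp r := by linarith [Real.add_one_le_exp r]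
    calc c * (Real.exp (-r ^ 2 / 2) * r) ≤ c * (Real.exp (-r ^ 2 / 2) * Real.exp r) :=
          mul_le_mul_of_nonneg_left
            (mul_le_mul_of_nonneg_left h1 (Real.exp_nonneg _)) hcpos.le
      _ = c * Real.exp (r + -r ^ 2 / 2) := by rw [Real.exp_add]; ring
      _ ≤ c * Real.exp (1 + -(4⁻¹) * r ^ 2) := by
          refine mul_le_mul_of_nonneg_left (Real.exp_le_exp.mpr ?_) hcpos.le
          nlinarith [sq_nonneg (1 - r / 2)]
      _ = (c * Real.exp 1) * Real.exp (-(4⁻¹ : ℝ) * r ^ 2) := by rw [Real.exp_add]; ring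

lemma integrable_norm_stdGaussian : Integrable (fun z : E => ‖z‖) (stdGaussian d) := by
  rw [stdGaussian_eq,
    show (fun x : E => ENNReal.ofReal (gaussD d x)) = (fun x => ((gaussD d x).toNNReal : ℝ≥0∞))
      from rfl,
    integrable_withDensity_iff_integrable_smul gaussD_smooth.continuous.measurable.real_toNNReal]
  have : (fun z : E => (gaussD d z).toNNReal • ‖z‖) = fun z : E => gaussD d z * ‖z‖ := by
    funext z; rw [NNReal.smul_def, Real.coe_toNNReal _ (gaussD_pos z).le, smul_eq_mul]
  rw [this]
  exact integrable_norm_gaussD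

lemma stein (φ : E → ℝ) (hφ : ContDiff ℝ (⊤ : ℕ∞) φ) (hφc : HasCompactSupport φ)
    {γ : ℝ} (hγ : 0 < γ) (y : E) :
    ∫ z, φ (y + γ • z) • z ∂(stdGaussian d)
      = γ • ∫ z, gradient φ (y + γ • z) ∂(stdGaussian d) := by
  have hA : Continuous fun z : E => y + γ • z := continuous_const.add (continuous_id.const_smul γ)
  have hψ : ContDiff ℝ (⊤ : ℕ∞) (fun z : E => φ (y + γ • z)) :=
    hφ.comp (contDiff_const.add (contDiff_id.const_smul γ))
  have hψc : HasCompactSupport (fun z : E => φ (y + γ • z)) :=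
    hφc.comp_homeomorph ((Homeomorph.smulOfNeZero γ hγ.ne').trans (Homeomorph.addLeft y))
  have hgradc : HasCompactSupport (fun z : E => gradient φ (y + γ • z)) :=
    (grad_supp hφc).comp_homeomorph
      ((Homeomorph.smulOfNeZero γ hγ.ne').trans (Homeomorph.addLeft y))
  rw [stdGaussian_eq, integral_density _ gaussD_smooth.continuous (fun x => (gaussD_pos x).le),
      integral_density _ gaussD_smooth.continuous (fun x => (gaussD_pos x).le)]
  have I1 : Integrable (fun z : E => gaussD d z • (φ (y + γ • z) • z)) :=
    (gaussD_smooth.continuous.smul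
      ((hψ.continuous).smul continuous_id)).integrable_of_hasCompactSupport
      (hψc.smul_right.smul_left)
  have I2 : Integrable (fun z : E => gaussD d z • gradient φ (y + γ • z)) :=
    (gaussD_smooth.continuous.smul
      ((grad_cont hφ).comp hA)).integrable_of_hasCompactSupport hgradc.smul_left
  refine ext_inner_right ℝ fun v => ?_
  have hflip : ∀ w : E, (inner ℝ w v : ℝ) = inner ℝ v w := fun w => real_inner_comm v w
  rw [hflip, hflip, real_inner_smul_right, ← integral_inner I1, ← integral_inner I2]
  have e3 : ∀ u : E, (inner ℝ v (gradient φ u) : ℝ) = fderiv ℝ φ u v := by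
    intro u; rw [← inner_grad]; exact (real_inner_comm v _).symm
  simp_rw [real_inner_smul_right, e3]
  -- scalar goal:
  -- ∫ z, gaussD z * (φ (y+γz) * ⟪v,z⟫) = γ * ∫ z, gaussD z * fderiv φ (y+γz) v
  have key := ibp (fun z : E => φ (y + γ • z)) (gaussD d) hψ hψc gaussD_smooth v
  have hψfd : ∀ z : E, fderiv ℝ (fun z : E => φ (y + γ • z)) z v
      = γ * fderiv ℝ φ (y + γ • z) v := by
    intro z
    have hAz : HasFDerivAt (fun w : E => y + γ • w) (γ • ContinuousLinearMap.id ℝ E) z :=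
      ((hasFDerivAt_id z).const_smul γ).const_add y
    have hc : HasFDerivAt (fun z : E => φ (y + γ • z))
        ((fderiv ℝ φ (y + γ • z)).comp (γ • ContinuousLinearMap.id ℝ E)) z :=
      (hφ.differentiable (ENat.one_le_iff_ne_zero_withTop.mp one_le_inf) (y + γ • z)).hasFDerivAt.comp z hAz
    rw [hc.fderiv]
    simp [ContinuousLinearMap.comp_apply, _root_.map_smul, smul_eq_mul]
  have e4 : ∀ z : E, φ (y + γ • z) * fderiv ℝ (gaussD d) z v
      = -(gaussD d z * (φ (y + γ • z) * ⟪v, z⟫)) := by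
    intro z
    rw [fderiv_gaussD, show (inner ℝ z v : ℝ) = inner ℝ v z from real_inner_comm v z]
    ring
  have e5 : ∀ z : E, fderiv ℝ (fun z : E => φ (y + γ • z)) z v * gaussD d z
      = γ * (gaussD d z * fderiv ℝ φ (y + γ • z) v) := by
    intro z; rw [hψfd z]; ring
  simp_rw [e4, e5, integral_neg, integral_const_mul] at key
  exact neg_injective key

end ScoreAux
open ScoreAux

/-- Fix `t ∈ (0,1)` and let `x_t = Y + γ z` with `Y ⟂ z ~ N(0,Id)` and `γ > 0`,
and let `ρ` be the (smooth, strictly positive) density of `x_t`.  Then for every compactly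
supported smooth `φ : ℝ^d → ℝ`, `E[z φ(x_t)] = −γ ∫ φ(x) ∇ρ(x) dx`.  Equivalently, the conditional
expectation `η_z(x) = E[z | x_t = x]` satisfies `η_z(x) ρ(x) = −γ ∇ρ(x)`, i.e. the score
`s(x) = ∇ log ρ(x)` equals `−γ⁻¹ η_z(x)` for all `x`. -/
theorem score_identity_of_gaussian_smoothing
    {d : ℕ} {Ω : Type*} [MeasurableSpace Ω] (P : Measure Ω) [IsProbabilityMeasure P]
    (γ : ℝ) (hγ : 0 < γ)
    (Y z : Ω → EuclideanSpace ℝ (Fin d))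
    (hYm : Measurable Y) (hzm : Measurable z)
    (hzlaw : Measure.map z P = stdGaussian d)
    (hindep : IndepFun Y z P)
    (ρ : EuclideanSpace ℝ (Fin d) → ℝ)
    (hρsmooth : ContDiff ℝ (⊤ : ℕ∞) ρ) (hρpos : ∀ x, 0 < ρ x)
    (hρlaw : Measure.map (fun ω => Y ω + γ • z ω) P
      = volume.withDensity fun x => ENNReal.ofReal (ρ x)) :
    (∀ φ : EuclideanSpace ℝ (Fin d) → ℝ, ContDiff ℝ (⊤ : ℕ∞) φ → HasCompactSupport φ →
      ∫ ω, φ (Y ω + γ • z ω) • z ω ∂P = (-γ) • ∫ x, φ x • gradient ρ x)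
      ∧ (∀ η : EuclideanSpace ℝ (Fin d) → EuclideanSpace ℝ (Fin d), Continuous η →
          (∀ φ : EuclideanSpace ℝ (Fin d) → ℝ, Measurable φ → (∃ C, ∀ x, |φ x| ≤ C) →
            ∫ ω, φ (Y ω + γ • z ω) • z ω ∂P = ∫ x, (φ x * ρ x) • η x) →
          ∀ x, ρ x • η x = (-γ) • gradient ρ x
            ∧ gradient (fun y => Real.log (ρ y)) x = (-γ⁻¹) • η x) := by
  haveI hGprob : IsProbabilityMeasure (stdGaussian d) :=
    hzlaw ▸ Measure.isProbabilityMeasure_map hzm.aemeasurable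
  haveI hμprob : IsProbabilityMeasure (P.map Y) := Measure.isProbabilityMeasure_map hYm.aemeasurable
  have hxt : Measurable fun ω => Y ω + γ • z ω := hYm.add (hzm.const_smul γ)
  have hpair : P.map (fun ω => (Y ω, z ω)) = (P.map Y).prod (stdGaussian d) := by
    have h := (indepFun_iff_map_prod_eq_prod_map_map hYm.aemeasurable hzm.aemeasurable).mp hindep
    rwa [hzlaw] at h
  have part1 : ∀ φ : EuclideanSpace ℝ (Fin d) → ℝ,
      ContDiff ℝ (⊤ : ℕ∞) φ → HasCompactSupport φ →
      ∫ ω, φ (Y ω + γ • z ω) • z ω ∂P = (-γ) • ∫ x, φ x • gradient ρ x := by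
    intro φ hφ hφc
    obtain ⟨C, hC⟩ := hφ.continuous.bounded_above_of_compact_support hφc
    obtain ⟨C2, hC2⟩ := (grad_cont hφ).bounded_above_of_compact_support (grad_supp hφc)
    have hcontF : Continuous fun p : EuclideanSpace ℝ (Fin d) × EuclideanSpace ℝ (Fin d) =>
        φ (p.1 + γ • p.2) • p.2 :=
      (hφ.continuous.comp (continuous_fst.add (continuous_snd.const_smul γ))).smul continuous_snd
    have hcontG : Continuous fun p : EuclideanSpace ℝ (Fin d) × EuclideanSpace ℝ (Fin d) =>
        gradient φ (p.1 + γ • p.2) :=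
      (grad_cont hφ).comp (continuous_fst.add (continuous_snd.const_smul γ))
    have hInt1 : Integrable (fun p : EuclideanSpace ℝ (Fin d) × EuclideanSpace ℝ (Fin d) =>
        φ (p.1 + γ • p.2) • p.2) ((P.map Y).prod (stdGaussian d)) := by
      refine Integrable.mono' ((integrable_const C).mul_prod integrable_norm_stdGaussian)
        hcontF.aestronglyMeasurable (Filter.Eventually.of_forall fun p => ?_)
      rw [norm_smul]
      exact mul_le_mul_of_nonneg_right (hC _) (norm_nonneg _)
    have hInt2 : Integrable (fun p : EuclideanSpace ℝ (Fin d) × EuclideanSpace ℝ (Fin d) =>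
        gradient φ (p.1 + γ • p.2)) ((P.map Y).prod (stdGaussian d)) := by
      refine Integrable.mono' (integrable_const C2)
        hcontG.aestronglyMeasurable (Filter.Eventually.of_forall fun p => hC2 _)
    have hstein : ∀ y, ∫ zz, φ (y + γ • zz) • zz ∂(stdGaussian d)
        = γ • ∫ zz, gradient φ (y + γ • zz) ∂(stdGaussian d) := fun y => stein φ hφ hφc hγ y
    calc ∫ ω, φ (Y ω + γ • z ω) • z ω ∂P
        = ∫ p, φ (p.1 + γ • p.2) • p.2 ∂((P.map Y).prod (stdGaussian d)) := by
          rw [← hpair, integral_map (hYm.prodMk hzm).aemeasurable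
            (hpair ▸ hcontF.aestronglyMeasurable)]
      _ = ∫ y, ∫ zz, φ (y + γ • zz) • zz ∂(stdGaussian d) ∂(P.map Y) := integral_prod _ hInt1
      _ = ∫ y, γ • ∫ zz, gradient φ (y + γ • zz) ∂(stdGaussian d) ∂(P.map Y) := by
          simp_rw [hstein]
      _ = γ • ∫ y, ∫ zz, gradient φ (y + γ • zz) ∂(stdGaussian d) ∂(P.map Y) := integral_smul _ _
      _ = γ • ∫ p, gradient φ (p.1 + γ • p.2) ∂((P.map Y).prod (stdGaussian d)) := by
          rw [integral_prod _ hInt2]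
      _ = γ • ∫ ω, gradient φ (Y ω + γ • z ω) ∂P := by
          rw [← hpair, integral_map (hYm.prodMk hzm).aemeasurable
            (hpair ▸ hcontG.aestronglyMeasurable)]
      _ = γ • ∫ x, gradient φ x ∂(P.map fun ω => Y ω + γ • z ω) := by
          rw [integral_map hxt.aemeasurable (grad_cont hφ).aestronglyMeasurable]
      _ = γ • ∫ x, ρ x • gradient φ x := by
          rw [hρlaw, integral_density ρ hρsmooth.continuous (fun x => (hρpos x).le)]
      _ = (-γ) • ∫ x, φ x • gradient ρ x := by
          rw [show ∫ x, ρ x • gradient φ x = - ∫ x, φ x • gradient ρ x from by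
            rw [ibp_vec φ ρ hφ hφc hρsmooth]; simp, smul_neg, neg_smul]
  refine ⟨part1, ?_⟩
  intro η hη hw
  set F : EuclideanSpace ℝ (Fin d) → EuclideanSpace ℝ (Fin d) :=
    fun x => ρ x • η x + γ • gradient ρ x with hF
  have hFcont : Continuous F :=
    (hρsmooth.continuous.smul hη).add ((grad_cont hρsmooth).const_smul γ)
  have hzero : ∀ g : EuclideanSpace ℝ (Fin d) → ℝ, ContDiff ℝ (⊤ : ℕ∞) g →
      HasCompactSupport g → ∫ x, g x • F x = 0 := by
    intro g hg hgc
    obtain ⟨C, hC⟩ := hg.continuous.bounded_above_of_compact_support hgc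
    have hwg := hw g hg.continuous.measurable
      ⟨C, fun x => by simpa [Real.norm_eq_abs] using hC x⟩
    have h1 := part1 g hg hgc
    have hkey : ∫ x, (g x * ρ x) • η x = (-γ) • ∫ x, g x • gradient ρ x := hwg.symm.trans h1
    have Ia : Integrable (fun x => g x • (ρ x • η x)) :=
      (hg.continuous.smul (hρsmooth.continuous.smul hη)).integrable_of_hasCompactSupport
        hgc.smul_right
    have Ib : Integrable (fun x => g x • (γ • gradient ρ x)) :=
      (hg.continuous.smul ((grad_cont hρsmooth).const_smul γ)).integrable_of_hasCompactSupport
        hgc.smul_right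
    have hsplit : (fun x => g x • F x)
        = fun x => g x • (ρ x • η x) + g x • (γ • gradient ρ x) := by
      funext x; rw [hF, smul_add]
    rw [hsplit, integral_add Ia Ib]
    have e1 : ∫ x, g x • (ρ x • η x) = ∫ x, (g x * ρ x) • η x := by
      simp_rw [smul_smul]
    have e2 : ∫ x, g x • (γ • gradient ρ x) = γ • ∫ x, g x • gradient ρ x := by
      simp_rw [smul_comm _ γ]
      exact integral_smul _ _
    rw [e1, e2, hkey, neg_smul, neg_add_cancel]
  have hae : ∀ᵐ x, F x = 0 :=
    ae_eq_zero_of_integral_contDiff_smul_eq_zero (hFcont.locallyIntegrable) hzero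
  have hF0 : ∀ x, F x = 0 := by
    have := (hFcont.ae_eq_iff_eq volume continuous_const).mp hae
    exact fun x => congrFun this x
  intro x
  have hx : ρ x • η x = (-γ) • gradient ρ x := by
    have := hF0 x
    rw [hF] at this
    have h2 : ρ x • η x = -(γ • gradient ρ x) := by
      exact eq_neg_of_add_eq_zero_left this
    rw [h2, neg_smul]
  refine ⟨hx, ?_⟩
  have hρd : DifferentiableAt ℝ ρ x := hρsmooth.differentiable (ENat.one_le_iff_ne_zero_withTop.mp one_le_inf) x
  have hδ : HasFDerivAt (fun y => Real.log (ρ y)) ((ρ x)⁻¹ • fderiv ℝ ρ x) x :=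
    (Real.hasDerivAt_log (hρpos x).ne').comp_hasFDerivAt x hρd.hasFDerivAt
  have hgl : gradient (fun y => Real.log (ρ y)) x = (ρ x)⁻¹ • gradient ρ x := by
    rw [hδ.hasGradientAt.gradient, _root_.map_smul]
    rfl
  have hgr : gradient ρ x = (-γ)⁻¹ • (ρ x • η x) := by
    rw [hx, smul_smul, inv_mul_cancel₀ (neg_ne_zero.mpr hγ.ne'), one_smul]
  rw [hgl, hgr, smul_smul, smul_smul]
  have : (ρ x)⁻¹ * (-γ)⁻¹ * ρ x = -γ⁻¹ := by
    rw [inv_neg]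
    field_simp [(hρpos x).ne']
  rw [this]
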